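/- Let q : ℝⁿ → (1,∞) with 1 < q_- ≤ q_+ < ∞ be such that both M is bounded on L^{q(·)}(ℝⁿ) and on L^{q'(·)}(ℝⁿ). Then there is C > 0 with C⁻¹ ≤ |B|⁻¹ ‖χ_B‖_{L^{q(·)}} ‖χ_B‖_{L^{q'(·)}} ≤ C for every ball B ⊂ ℝⁿ. -/

import Mathlib

open MeasureTheory Metric
open scoped ENNReal

/-- The Luxemburg norm of `f` in the variable exponent Lebesgue space `L^{q(·)}(ℝⁿ)`. -/
noncomputable def vLpNorm {n : ℕ} (q : EuclideanSpace ℝ (Fin n) → ℝ)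
    (f : EuclideanSpace ℝ (Fin n) → ℝ) : ℝ≥0∞ :=
  sInf {η : ℝ≥0∞ | η ≠ 0 ∧ ∫⁻ x, ((‖f x‖₊ : ℝ≥0∞) / η) ^ (q x) ≤ 1}

/-- The Hardy–Littlewood maximal operator `Mf(x) = sup_{r>0} r^{-n} ∫_{B(x,r)} |f|`. -/
noncomputable def maxOp {n : ℕ} (f : EuclideanSpace ℝ (Fin n) → ℝ)
    (x : EuclideanSpace ℝ (Fin n)) : ℝ :=
  ⨆ r : {r : ℝ // 0 < r}, (r : ℝ) ^ (-(n:ℝ)) * ∫ y in ball x (r : ℝ), |f y|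

namespace Stmt12Aux

variable {n : ℕ}

lemma vLpNorm_le {q f : EuclideanSpace ℝ (Fin n) → ℝ} {η : ℝ≥0∞}
    (hη : η ≠ 0) (h : (∫⁻ x, ((‖f x‖₊ : ℝ≥0∞) / η) ^ (q x)) ≤ 1) :
    vLpNorm q f ≤ η := sInf_le ⟨hη, h⟩

lemma le_vLpNorm {q f : EuclideanSpace ℝ (Fin n) → ℝ} {a : ℝ≥0∞}
    (h : ∀ η : ℝ≥0∞, η ≠ 0 → (∫⁻ x, ((‖f x‖₊ : ℝ≥0∞) / η) ^ (q x)) ≤ 1 → a ≤ η) :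
    a ≤ vLpNorm q f := le_sInf (fun _ hη => h _ hη.1 hη.2)

lemma vLpNorm_mono {q f g : EuclideanSpace ℝ (Fin n) → ℝ} (hq : ∀ x, 0 ≤ q x)
    (hfg : ∀ x, |f x| ≤ |g x|) : vLpNorm q f ≤ vLpNorm q g := by
  refine sInf_le_sInf (fun η hη => ⟨hη.1, le_trans (lintegral_mono fun x => ?_) hη.2⟩)
  refine ENNReal.rpow_le_rpow (ENNReal.div_le_div_right ?_ _) (hq x)
  have h1 : ‖f x‖ ≤ ‖g x‖ := by simpa [Real.norm_eq_abs] using hfg x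
  have h2 : ‖f x‖₊ ≤ ‖g x‖₊ := by exact_mod_cast h1
  exact ENNReal.coe_le_coe.2 h2

/-- modular of an indicator function. -/
lemma modular_indicator (q g : EuclideanSpace ℝ (Fin n) → ℝ)
    (hq : ∀ x, 0 < q x) {B : Set (EuclideanSpace ℝ (Fin n))} (hB : MeasurableSet B)
    (η : ℝ≥0∞) :
    (∫⁻ x, ((‖B.indicator g x‖₊ : ℝ≥0∞) / η) ^ (q x))
      = ∫⁻ x in B, ((‖g x‖₊ : ℝ≥0∞) / η) ^ (q x) := by
  rw [← lintegral_indicator hB]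
  congr 1; ext x
  by_cases hx : x ∈ B
  · simp [Set.indicator_of_mem hx]
  · simp [Set.indicator_of_notMem hx, ENNReal.zero_div,
      ENNReal.zero_rpow_of_pos (hq x)]

lemma norm_indicator_le (q : EuclideanSpace ℝ (Fin n) → ℝ) (hq : ∀ x, 1 ≤ q x)
    {B : Set (EuclideanSpace ℝ (Fin n))} (hB : MeasurableSet B)
    (hv : volume B ≠ ∞) :
    vLpNorm q (B.indicator fun _ => (1:ℝ)) ≤ max 1 (volume B) := by
  have hη0 : (max 1 (volume B)) ≠ 0 := by simp
  have hηtop : (max 1 (volume B)) ≠ ∞ := by simp [hv]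
  refine vLpNorm_le hη0 ?_
  rw [modular_indicator q _ (fun x => lt_of_lt_of_le one_pos (hq x)) hB]
  have hpt : ∀ x, ((‖(1:ℝ)‖₊ : ℝ≥0∞) / max 1 (volume B)) ^ (q x)
      ≤ (max 1 (volume B))⁻¹ := by
    intro x
    have h1 : ((‖(1:ℝ)‖₊ : ℝ≥0∞) / max 1 (volume B)) = (max 1 (volume B))⁻¹ := by
      simp [one_div]
    rw [h1]
    have hle1 : (max 1 (volume B))⁻¹ ≤ 1 := by
      simp [ENNReal.inv_le_one]
    calc (max 1 (volume B))⁻¹ ^ (q x) ≤ (max 1 (volume B))⁻¹ ^ (1:ℝ) :=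
          ENNReal.rpow_le_rpow_of_exponent_ge hle1 (hq x)
      _ = (max 1 (volume B))⁻¹ := ENNReal.rpow_one _
  calc (∫⁻ x in B, ((‖(1:ℝ)‖₊ : ℝ≥0∞) / max 1 (volume B)) ^ (q x))
      ≤ ∫⁻ _ in B, (max 1 (volume B))⁻¹ := lintegral_mono (fun x => hpt x)
    _ = (max 1 (volume B))⁻¹ * volume B := setLIntegral_const _ _
    _ ≤ (max 1 (volume B))⁻¹ * max 1 (volume B) := by gcongr; exact le_max_right _ _
    _ = 1 := ENNReal.inv_mul_cancel hη0 hηtop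

lemma le_norm_indicator (q : EuclideanSpace ℝ (Fin n) → ℝ) (hq : ∀ x, 1 ≤ q x)
    {B : Set (EuclideanSpace ℝ (Fin n))} (hB : MeasurableSet B) :
    min 1 (volume B) ≤ vLpNorm q (B.indicator fun _ => (1:ℝ)) := by
  refine le_vLpNorm (fun η hη hmod => ?_)
  by_contra hlt
  push_neg at hlt
  have hη1 : η < 1 := lt_of_lt_of_le hlt (min_le_left _ _)
  have hηv : η < volume B := lt_of_lt_of_le hlt (min_le_right _ _)
  rw [modular_indicator q _ (fun x => lt_of_lt_of_le one_pos (hq x)) hB] at hmod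
  have hpt : ∀ x, η⁻¹ ≤ ((‖(1:ℝ)‖₊ : ℝ≥0∞) / η) ^ (q x) := by
    intro x
    have h1 : ((‖(1:ℝ)‖₊ : ℝ≥0∞) / η) = η⁻¹ := by simp [one_div]
    rw [h1]
    have h2 : (1:ℝ≥0∞) ≤ η⁻¹ := ENNReal.one_le_inv.2 hη1.le
    calc η⁻¹ = η⁻¹ ^ (1:ℝ) := (ENNReal.rpow_one _).symm
      _ ≤ η⁻¹ ^ (q x) := ENNReal.rpow_le_rpow_of_exponent_le h2 (hq x)
  have hlow : η⁻¹ * volume B ≤ 1 := by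
    calc η⁻¹ * volume B = ∫⁻ _ in B, η⁻¹ := (setLIntegral_const _ _).symm
      _ ≤ ∫⁻ x in B, ((‖(1:ℝ)‖₊ : ℝ≥0∞) / η) ^ (q x) := lintegral_mono (fun x => hpt x)
      _ ≤ 1 := hmod
  have hvle : volume B ≤ η := by
    have hη' : η ≠ ∞ := ne_top_of_lt hη1
    calc volume B = η * (η⁻¹ * volume B) := by
          rw [← mul_assoc, ENNReal.mul_inv_cancel hη hη', one_mul]
      _ ≤ η * 1 := by gcongr
      _ = η := mul_one _
  exact absurd hvle (not_le.2 hηv)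

end Stmt12Aux

/-- if `1 < q₋ ≤ q₊ < ∞` and the maximal operator is bounded on both
`L^{q(·)}(ℝⁿ)` and `L^{q'(·)}(ℝⁿ)` (`q'(x) = q(x)/(q(x)-1)`), then there exists `C > 0`
with `C⁻¹ ≤ |B|⁻¹ ‖χ_B‖_{L^{q(·)}} ‖χ_B‖_{L^{q'(·)}} ≤ C` for every ball `B`. -/
theorem stmt12 (n : ℕ) (hn : 0 < n) (q : EuclideanSpace ℝ (Fin n) → ℝ)
    (hqmeas : Measurable q) (hq1 : ∀ x, 1 < q x) (hqbdd : ∃ K : ℝ, ∀ x, q x ≤ K)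
    (hM : ∃ A : ℝ≥0∞, A ≠ ⊤ ∧ ∀ f : EuclideanSpace ℝ (Fin n) → ℝ,
      vLpNorm q (maxOp f) ≤ A * vLpNorm q f)
    (hM' : ∃ A : ℝ≥0∞, A ≠ ⊤ ∧ ∀ f : EuclideanSpace ℝ (Fin n) → ℝ,
      vLpNorm (fun x => q x / (q x - 1)) (maxOp f) ≤
        A * vLpNorm (fun x => q x / (q x - 1)) f) :
    ∃ C : ℝ, 0 < C ∧
      ∀ (c : EuclideanSpace ℝ (Fin n)) (r : ℝ), 0 < r →
        ENNReal.ofReal C⁻¹ ≤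
            (volume (closedBall c r))⁻¹ *
              (vLpNorm q ((closedBall c r).indicator fun _ => (1:ℝ)) *
                vLpNorm (fun x => q x / (q x - 1))
                  ((closedBall c r).indicator fun _ => (1:ℝ))) ∧
          (volume (closedBall c r))⁻¹ *
              (vLpNorm q ((closedBall c r).indicator fun _ => (1:ℝ)) *
                vLpNorm (fun x => q x / (q x - 1))
                  ((closedBall c r).indicator fun _ => (1:ℝ))) ≤
            ENNReal.ofReal C := by
  clear hM'
  obtain ⟨A, hAtop, hMq⟩ := hM
  obtain ⟨K, hK⟩ := hqbdd
  have hq0 : ∀ x, (0:ℝ) < q x := fun x => lt_trans one_pos (hq1 x)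
  have hq1' : ∀ x, (1:ℝ) ≤ q x := fun x => (hq1 x).le
  have hconj : ∀ x, (q x).HolderConjugate (q x / (q x - 1)) :=
    fun x => Real.HolderConjugate.conjExponent (hq1 x)
  have hq'1 : ∀ x, (1:ℝ) ≤ q x / (q x - 1) := fun x => ((hconj x).symm.lt).le
  have hq'0 : ∀ x, (0:ℝ) < q x / (q x - 1) := fun x => lt_of_lt_of_le one_pos (hq'1 x)
  set ω : ℝ≥0∞ := volume (ball (0:EuclideanSpace ℝ (Fin n)) 1) with hωdef
  have hω0 : ω ≠ 0 := (measure_ball_pos volume 0 one_pos).ne'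
  have hωtop : ω ≠ ∞ := measure_ball_lt_top.ne
  set lam : ℝ≥0∞ := (A + 1) * ENNReal.ofReal (3 ^ n) / ω with hlamdef
  have h3n : (0:ℝ) < 3 ^ n := by positivity
  have hlam0 : lam ≠ 0 := by
    rw [hlamdef]
    simp only [ne_eq, ENNReal.div_eq_zero_iff, mul_eq_zero, not_or]
    refine ⟨⟨?_, ?_⟩, hωtop⟩
    · simp
    · simp [ENNReal.ofReal_eq_zero, not_le, h3n]
  have hlamtop : lam ≠ ∞ := by
    rw [hlamdef]
    rw [ENNReal.div_eq_inv_mul]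
    exact ENNReal.mul_ne_top (ENNReal.inv_ne_top.2 hω0)
      (ENNReal.mul_ne_top (by simp [hAtop]) ENNReal.ofReal_ne_top)
  refine ⟨max 2 lam.toReal, lt_of_lt_of_le two_pos (le_max_left _ _), fun c r hr => ?_⟩
  set B := closedBall c r with hBdef
  have hB : MeasurableSet B := measurableSet_closedBall
  set v := volume B with hvdef
  have hv0 : v ≠ 0 := (Metric.measure_closedBall_pos volume c hr).ne'
  have hvtop : v ≠ ∞ := measure_closedBall_lt_top.ne
  set N := vLpNorm q (B.indicator fun _ => (1:ℝ)) with hNdef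
  set N' := vLpNorm (fun x => q x / (q x - 1)) (B.indicator fun _ => (1:ℝ)) with hN'def
  have hN_le : N ≤ max 1 v := Stmt12Aux.norm_indicator_le q hq1' hB hvtop
  have hN_ge : min 1 v ≤ N := Stmt12Aux.le_norm_indicator q hq1' hB
  have hN0 : N ≠ 0 := by
    refine (lt_of_lt_of_le ?_ hN_ge).ne'
    exact lt_min one_pos (pos_iff_ne_zero.2 hv0)
  have hNtop : N ≠ ∞ := (lt_of_le_of_lt hN_le (by simp [lt_top_iff_ne_top, hvtop])).ne
  -- rewriting modulars of indicators
  have hmodq : ∀ η : ℝ≥0∞,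
      (∫⁻ x, ((‖(B.indicator fun _ => (1:ℝ)) x‖₊ : ℝ≥0∞) / η) ^ (q x))
        = ∫⁻ x in B, (1 / η) ^ (q x) := by
    intro η
    rw [Stmt12Aux.modular_indicator q _ hq0 hB]
    simp
  have hmodq' : ∀ η : ℝ≥0∞,
      (∫⁻ x, ((‖(B.indicator fun _ => (1:ℝ)) x‖₊ : ℝ≥0∞) / η) ^ (q x / (q x - 1)))
        = ∫⁻ x in B, (1 / η) ^ (q x / (q x - 1)) := by
    intro η
    rw [Stmt12Aux.modular_indicator _ _ hq'0 hB]
    simp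
  ---- LOWER BOUND (Hölder / Young)
  have key : ∀ η η' : ℝ≥0∞, η ≠ 0 → η' ≠ 0 →
      (∫⁻ x in B, (1 / η) ^ (q x)) ≤ 1 →
      (∫⁻ x in B, (1 / η') ^ (q x / (q x - 1))) ≤ 1 →
      v ≤ 2 * (η * η') := by
    intro η η' hη hη' h1 h2
    rcases eq_or_ne η ∞ with hT | hηt
    · rw [hT, ENNReal.top_mul hη', ENNReal.mul_top (by simp)]; exact le_top
    rcases eq_or_ne η' ∞ with hT | hη't
    · rw [hT, ENNReal.mul_top hη, ENNReal.mul_top (by simp)]; exact le_top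
    have hpt : ∀ x, η⁻¹ * η'⁻¹ ≤ (1/η) ^ (q x) + (1/η') ^ (q x / (q x - 1)) := by
      intro x
      calc η⁻¹ * η'⁻¹ = (1/η) * (1/η') := by rw [one_div, one_div]
        _ ≤ (1/η) ^ (q x) / ENNReal.ofReal (q x)
              + (1/η') ^ (q x / (q x - 1)) / ENNReal.ofReal (q x / (q x - 1)) :=
            ENNReal.young_inequality _ _ (hconj x)
        _ ≤ (1/η) ^ (q x) / 1 + (1/η') ^ (q x / (q x - 1)) / 1 := by
            gcongr
            · exact ENNReal.one_le_ofReal.2 (hq1' x)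
            · exact ENNReal.one_le_ofReal.2 (hq'1 x)
        _ = (1/η) ^ (q x) + (1/η') ^ (q x / (q x - 1)) := by simp
    have hmul : (η⁻¹ * η'⁻¹) * v ≤ 2 := by
      calc (η⁻¹ * η'⁻¹) * v = ∫⁻ _ in B, η⁻¹ * η'⁻¹ := (setLIntegral_const _ _).symm
        _ ≤ ∫⁻ x in B, ((1/η) ^ (q x) + (1/η') ^ (q x / (q x - 1))) :=
            lintegral_mono (fun x => hpt x)
        _ = (∫⁻ x in B, (1/η) ^ (q x)) + ∫⁻ x in B, (1/η') ^ (q x / (q x - 1)) :=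
            lintegral_add_left (measurable_const.pow hqmeas) _
        _ ≤ 1 + 1 := add_le_add h1 h2
        _ = 2 := one_add_one_eq_two
    calc v = (η * η') * ((η⁻¹ * η'⁻¹) * v) := by
          rw [← mul_assoc]
          rw [show (η * η') * (η⁻¹ * η'⁻¹) = (η * η⁻¹) * (η' * η'⁻¹) by ring]
          rw [ENNReal.mul_inv_cancel hη hηt, ENNReal.mul_inv_cancel hη' hη't, one_mul, one_mul]
      _ ≤ (η * η') * 2 := by gcongr
      _ = 2 * (η * η') := mul_comm _ _
  have hlow : v ≤ 2 * (N * N') := by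
    have step1 : ∀ η' : ℝ≥0∞, η' ≠ 0 → η' ≠ ∞ →
        (∫⁻ x in B, (1 / η') ^ (q x / (q x - 1))) ≤ 1 → v / (2 * η') ≤ N := by
      intro η' h0 ht hm
      refine Stmt12Aux.le_vLpNorm (fun η hη hmod => ?_)
      rw [hmodq η] at hmod
      rw [ENNReal.div_le_iff_le_mul (Or.inl (by simp [h0])) (Or.inr hη)]
      calc v ≤ 2 * (η * η') := key η η' hη h0 hmod hm
        _ = η * (2 * η') := by ring
    have step2 : v / (2 * N) ≤ N' := by
      refine Stmt12Aux.le_vLpNorm (fun η' hη' hmod' => ?_)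
      rcases eq_or_ne η' ∞ with hT | hη't
      · rw [hT]; exact le_top
      rw [hmodq' η'] at hmod'
      have h1 : v ≤ N * (2 * η') := by
        rw [← ENNReal.div_le_iff_le_mul (Or.inl (by simp [hη'])) (Or.inr hN0)]
        · exact step1 η' hη' hη't hmod'
      rw [ENNReal.div_le_iff_le_mul (Or.inl (by simp [hN0])) (Or.inr hη')]
      calc v ≤ N * (2 * η') := h1
        _ = η' * (2 * N) := by ring
    calc v ≤ N' * (2 * N) := by
          rw [← ENNReal.div_le_iff_le_mul (Or.inl (by simp [hN0]))
            (Or.inl (ENNReal.mul_ne_top ENNReal.ofNat_ne_top hNtop))]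
          exact step2
      _ = 2 * (N * N') := by ring
  ---- UPPER BOUND
  have hupper : N * N' ≤ lam * v := by
    haveI : Nontrivial (EuclideanSpace ℝ (Fin n)) := by
      haveI : Nonempty (Fin n) := ⟨⟨0, hn⟩⟩
      infer_instance
    have hfinrank : Module.finrank ℝ (EuclideanSpace ℝ (Fin n)) = n :=
      finrank_euclideanSpace_fin
    have hvol : v = ENNReal.ofReal (r ^ n) * ω := by
      rw [hvdef, hBdef, Measure.addHaar_closedBall volume c hr.le, hfinrank, hωdef]
    have hlamv0 : lam * v ≠ 0 := by simp [hlam0, hv0]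
    have hlamvtop : lam * v ≠ ∞ := ENNReal.mul_ne_top hlamtop hvtop
    set β : ℝ := (N / (lam * v)).toReal with hβdef
    have hdivtop : N / (lam * v) ≠ ∞ := by
      rw [div_eq_mul_inv]
      exact ENNReal.mul_ne_top hNtop (ENNReal.inv_ne_top.2 hlamv0)
    have hdiv0 : N / (lam * v) ≠ 0 := by
      simp [ENNReal.div_eq_zero_iff, hN0, hlamvtop]
    have hβofReal : ENNReal.ofReal β = N / (lam * v) := by
      rw [hβdef]; exact ENNReal.ofReal_toReal hdivtop
    have hβ0 : 0 < β := by rw [hβdef]; exact ENNReal.toReal_pos hdiv0 hdivtop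
    set s : EuclideanSpace ℝ (Fin n) → ℝ := fun x => β ^ (1 / (q x - 1)) with hsdef
    have hs_pos : ∀ x, 0 < s x := fun x => Real.rpow_pos_of_pos hβ0 _
    have hs_meas : Measurable s :=
      measurable_const.pow (measurable_const.div (hqmeas.sub measurable_const))
    have hK0 : (0:ℝ) ≤ K := le_trans (hq0 0).le (hK 0)
    have h3r : (0:ℝ) < 3 * r := by linarith
    have hP : (0:ℝ) < (3 * r) ^ n := by positivity
    have hrpow : (3 * r : ℝ) ^ (-(n:ℝ)) = ((3 * r) ^ n)⁻¹ := by
      rw [Real.rpow_neg h3r.le, Real.rpow_natCast]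
    have hPne0 : ENNReal.ofReal ((3 * r) ^ n) ≠ 0 := by
      simp [ENNReal.ofReal_eq_zero, not_le, hP]
    have hPnetop : ENNReal.ofReal ((3 * r) ^ n) ≠ ∞ := ENNReal.ofReal_ne_top
    have hlv : lam * v = (A + 1) * ENNReal.ofReal ((3 * r) ^ n) := by
      rw [hlamdef, hvol, div_eq_mul_inv]
      calc (A + 1) * ENNReal.ofReal (3 ^ n) * ω⁻¹ * (ENNReal.ofReal (r ^ n) * ω)
          = (A + 1) * (ENNReal.ofReal (3 ^ n) * ENNReal.ofReal (r ^ n)) * (ω⁻¹ * ω) := by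
            ring
        _ = (A + 1) * ENNReal.ofReal ((3 * r) ^ n) := by
            rw [ENNReal.inv_mul_cancel hω0 hωtop, mul_one,
              ← ENNReal.ofReal_mul (by positivity)]
            congr 2
            rw [mul_pow]
    -- key truncated estimate
    have hkey : ∀ m : ℕ,
        (∫⁻ x in B, (ENNReal.ofReal (min (s x) ((m:ℝ) + 1))) ^ (q x)) ≤ 1 := by
      intro m
      set t : EuclideanSpace ℝ (Fin n) → ℝ := fun x => min (s x) ((m:ℝ) + 1) with htdef
      show (∫⁻ x in B, (ENNReal.ofReal (t x)) ^ (q x)) ≤ 1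
      have ht_pos : ∀ x, 0 < t x := fun x => lt_min (hs_pos x) (by positivity)
      have ht_le_s : ∀ x, t x ≤ s x := fun x => min_le_left _ _
      have ht_le_m : ∀ x, t x ≤ (m:ℝ) + 1 := fun x => min_le_right _ _
      have ht_meas : Measurable t := hs_meas.min measurable_const
      set ρ : ℝ≥0∞ := ∫⁻ x in B, (ENNReal.ofReal (t x)) ^ (q x) with hρdef
      have h1m : (1:ℝ≥0∞) ≤ ENNReal.ofReal ((m:ℝ) + 1) := by
        rw [ENNReal.one_le_ofReal]
        have : (0:ℝ) ≤ (m:ℝ) := Nat.cast_nonneg m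
        linarith
      have hρtop : ρ ≠ ∞ := by
        have hb : ρ ≤ (ENNReal.ofReal ((m:ℝ) + 1)) ^ K * v := by
          rw [hρdef]
          calc (∫⁻ x in B, (ENNReal.ofReal (t x)) ^ (q x))
              ≤ ∫⁻ _ in B, (ENNReal.ofReal ((m:ℝ) + 1)) ^ K := by
                refine lintegral_mono fun x => ?_
                calc (ENNReal.ofReal (t x)) ^ (q x)
                    ≤ (ENNReal.ofReal ((m:ℝ) + 1)) ^ (q x) :=
                      ENNReal.rpow_le_rpow
                        (ENNReal.ofReal_le_ofReal (ht_le_m x)) (hq0 x).le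
                  _ ≤ (ENNReal.ofReal ((m:ℝ) + 1)) ^ K :=
                      ENNReal.rpow_le_rpow_of_exponent_le h1m (hK x)
            _ = (ENNReal.ofReal ((m:ℝ) + 1)) ^ K * v := setLIntegral_const _ _
        refine (lt_of_le_of_lt hb ?_).ne
        refine ENNReal.mul_lt_top ?_ (lt_top_iff_ne_top.2 hvtop)
        exact lt_top_iff_ne_top.2
          (ENNReal.rpow_ne_top_of_nonneg hK0 ENNReal.ofReal_ne_top)
      have hsq : ∀ x, (s x) ^ (q x - 1) = β := by
        intro x
        rw [hsdef]
        rw [← Real.rpow_mul hβ0.le, one_div,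
          inv_mul_cancel₀ (hconj x).sub_one_ne_zero, Real.rpow_one]
      have hpt : ∀ x, (ENNReal.ofReal (t x)) ^ (q x)
          ≤ ENNReal.ofReal β * ENNReal.ofReal (t x) := by
        intro x
        rw [ENNReal.ofReal_rpow_of_pos (ht_pos x), ← ENNReal.ofReal_mul hβ0.le]
        apply ENNReal.ofReal_le_ofReal
        have hsplit : (t x) ^ (q x) = (t x) ^ (q x - 1) * (t x) ^ (1:ℝ) := by
          rw [← Real.rpow_add (ht_pos x), sub_add_cancel]
        calc (t x) ^ (q x) = (t x) ^ (q x - 1) * (t x) ^ (1:ℝ) := hsplit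
          _ ≤ (s x) ^ (q x - 1) * (t x) ^ (1:ℝ) := by
              refine mul_le_mul_of_nonneg_right ?_ (Real.rpow_nonneg (ht_pos x).le _)
              exact Real.rpow_le_rpow (ht_pos x).le (ht_le_s x) (by linarith [hq1 x])
          _ = β * t x := by rw [hsq x, Real.rpow_one]
      set I : ℝ := ∫ x in B, t x with hIdef
      have htInt : IntegrableOn t B volume := by
        refine Integrable.mono'
          (integrableOn_const (C := ((m:ℝ) + 1)) hvtop)
          ht_meas.aestronglyMeasurable
          (Filter.Eventually.of_forall fun x => ?_)
        rw [Real.norm_eq_abs, abs_of_pos (ht_pos x)]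
        exact ht_le_m x
      have hI_eq : (∫⁻ x in B, ENNReal.ofReal (t x)) = ENNReal.ofReal I := by
        rw [hIdef,
          ofReal_integral_eq_lintegral_ofReal htInt
            (Filter.Eventually.of_forall fun x => (ht_pos x).le)]
      have hρI : ρ ≤ ENNReal.ofReal β * ENNReal.ofReal I := by
        calc ρ ≤ ∫⁻ x in B, ENNReal.ofReal β * ENNReal.ofReal (t x) :=
              lintegral_mono fun x => hpt x
          _ = ENNReal.ofReal β * ∫⁻ x in B, ENNReal.ofReal (t x) :=
              lintegral_const_mul'' _ ht_meas.ennreal_ofReal.aemeasurable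
          _ = ENNReal.ofReal β * ENNReal.ofReal I := by rw [hI_eq]
      rcases le_or_gt I 0 with hI0 | hIpos
      · have hρ0 : ρ = 0 := by
          refine le_antisymm ?_ (zero_le)
          calc ρ ≤ ENNReal.ofReal β * ENNReal.ofReal I := hρI
            _ = 0 := by rw [ENNReal.ofReal_eq_zero.2 hI0, mul_zero]
        rw [hρ0]; exact zero_le_one
      -- main case
      set f : EuclideanSpace ℝ (Fin n) → ℝ := B.indicator t with hfdef
      have hf_meas : Measurable f := ht_meas.indicator hB
      have hf_nonneg : ∀ y, 0 ≤ f y := fun y =>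
        Set.indicator_nonneg (fun z _ => (ht_pos z).le) y
      have hf_le : ∀ y, f y ≤ (m:ℝ) + 1 := by
        intro y
        rw [hfdef]
        by_cases hy : y ∈ B
        · rw [Set.indicator_of_mem hy]; exact ht_le_m y
        · rw [Set.indicator_of_notMem hy]
          have : (0:ℝ) ≤ (m:ℝ) := Nat.cast_nonneg m
          linarith
      set d : ℝ := (3 * r) ^ (-(n:ℝ)) * I with hddef
      have hd0 : 0 < d := by
        rw [hddef, hrpow]
        exact mul_pos (inv_pos.2 hP) hIpos
      -- pointwise lower bound on the maximal function
      have hmax_ge : ∀ x ∈ B, d ≤ maxOp f x := by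
        intro x hx
        have hsub : B ⊆ ball x (3 * r) := by
          intro y hy
          rw [mem_ball]
          calc dist y x ≤ dist y c + dist c x := dist_triangle _ _ _
            _ ≤ r + r := add_le_add (mem_closedBall.1 hy)
                (by rw [dist_comm]; exact mem_closedBall.1 hx)
            _ < 3 * r := by linarith
        have habs : ∀ y, |f y| = f y := fun y => abs_of_nonneg (hf_nonneg y)
        have hterm : (3 * r : ℝ) ^ (-(n:ℝ)) * ∫ y in ball x (3 * r), |f y| = d := by
          rw [hddef]
          congr 1
          calc (∫ y in ball x (3 * r), |f y|) = ∫ y in ball x (3 * r), f y := by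
                simp_rw [habs]
            _ = ∫ y in ball x (3 * r) ∩ B, t y := by
                rw [hfdef, setIntegral_indicator hB]
            _ = ∫ y in B, t y := by
                rw [Set.inter_eq_self_of_subset_right hsub]
            _ = I := hIdef.symm
        have hfInt : ∀ (z : EuclideanSpace ℝ (Fin n)) (r' : ℝ),
            IntegrableOn (fun y => |f y|) (ball z r') volume := by
          intro z r'
          refine Integrable.mono'
            (integrableOn_const (C := ((m:ℝ) + 1)) measure_ball_lt_top.ne)
            hf_meas.abs.aestronglyMeasurable
            (Filter.Eventually.of_forall fun y => ?_)
          rw [Real.norm_eq_abs, abs_abs, habs y]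
          exact hf_le y
        have hbdd : BddAbove (Set.range fun r' : {r' : ℝ // 0 < r'} =>
            (r' : ℝ) ^ (-(n:ℝ)) * ∫ y in ball x (r' : ℝ), |f y|) := by
          refine ⟨((m:ℝ) + 1) * ω.toReal, ?_⟩
          rintro z ⟨⟨r', hr'⟩, rfl⟩
          simp only
          have hvol' : volume (ball x r') = ENNReal.ofReal (r' ^ n) * ω := by
            rw [Measure.addHaar_ball volume x hr'.le, hfinrank, hωdef]
          have hr'n : (0:ℝ) < r' ^ n := by positivity
          have hint : (∫ y in ball x r', |f y|) ≤ ((m:ℝ) + 1) * (r' ^ n * ω.toReal) := by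
            calc (∫ y in ball x r', |f y|) ≤ ∫ _ in ball x r', ((m:ℝ) + 1) := by
                  refine setIntegral_mono_on (hfInt x r')
                    (integrableOn_const (C := ((m:ℝ) + 1)) measure_ball_lt_top.ne)
                    measurableSet_ball (fun y _ => ?_)
                  rw [habs y]; exact hf_le y
              _ = (volume (ball x r')).toReal * ((m:ℝ) + 1) := by
                  rw [setIntegral_const, smul_eq_mul, measureReal_def]
              _ = ((m:ℝ) + 1) * (r' ^ n * ω.toReal) := by
                  rw [hvol', ENNReal.toReal_mul,
                    ENNReal.toReal_ofReal hr'n.le]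
                  ring
          calc (r' : ℝ) ^ (-(n:ℝ)) * ∫ y in ball x r', |f y|
              ≤ (r' : ℝ) ^ (-(n:ℝ)) * (((m:ℝ) + 1) * (r' ^ n * ω.toReal)) :=
                mul_le_mul_of_nonneg_left hint (Real.rpow_nonneg hr'.le _)
            _ = ((m:ℝ) + 1) * ω.toReal := by
                rw [Real.rpow_neg hr'.le, Real.rpow_natCast]
                field_simp
        have hterm' := le_ciSup hbdd (⟨3 * r, h3r⟩ : {r' : ℝ // 0 < r'})
        rw [hterm] at hterm'
        exact hterm'
      have hmax_nonneg : ∀ x, 0 ≤ maxOp f x := fun x =>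
        Real.iSup_nonneg fun r' =>
          mul_nonneg (Real.rpow_nonneg r'.2.le _)
            (integral_nonneg fun y => abs_nonneg _)
      -- norm bound of f
      have hfnorm : vLpNorm q f ≤ 1 ⊔ ρ := by
        refine Stmt12Aux.vLpNorm_le (by simp) ?_
        rw [hfdef, Stmt12Aux.modular_indicator q _ hq0 hB]
        have h1η : (1:ℝ≥0∞) ≤ 1 ⊔ ρ := le_max_left _ _
        have hptb : ∀ x, ((‖t x‖₊ : ℝ≥0∞) / (1 ⊔ ρ)) ^ (q x)
            ≤ (ENNReal.ofReal (t x)) ^ (q x) / (1 ⊔ ρ) := by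
          intro x
          rw [show (‖t x‖₊ : ℝ≥0∞) = ENNReal.ofReal (t x) from Real.enorm_eq_ofReal (ht_pos x).le,
            ENNReal.div_rpow_of_nonneg _ _ (hq0 x).le]
          refine ENNReal.div_le_div_left ?_ _
          calc (1 ⊔ ρ) = (1 ⊔ ρ) ^ (1:ℝ) := (ENNReal.rpow_one _).symm
            _ ≤ (1 ⊔ ρ) ^ (q x) :=
              ENNReal.rpow_le_rpow_of_exponent_le h1η (hq1' x)
        calc (∫⁻ x in B, ((‖t x‖₊ : ℝ≥0∞) / (1 ⊔ ρ)) ^ (q x))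
            ≤ ∫⁻ x in B, (ENNReal.ofReal (t x)) ^ (q x) / (1 ⊔ ρ) :=
              lintegral_mono fun x => hptb x
          _ = ρ / (1 ⊔ ρ) := by
              simp_rw [div_eq_mul_inv]
              rw [lintegral_mul_const'' _
                (ht_meas.ennreal_ofReal.pow hqmeas).aemeasurable]
          _ ≤ 1 := ENNReal.div_le_of_le_mul (by
              rw [one_mul]; exact le_max_right _ _)
      -- lower bound for the norm of maxOp f
      have hdN : ENNReal.ofReal d * N ≤ vLpNorm q (maxOp f) := by
        have h1 : vLpNorm q (B.indicator fun _ => d) ≤ vLpNorm q (maxOp f) := by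
          refine Stmt12Aux.vLpNorm_mono (fun x => (hq0 x).le) (fun x => ?_)
          by_cases hx : x ∈ B
          · rw [Set.indicator_of_mem hx, abs_of_pos hd0,
              abs_of_nonneg (hmax_nonneg x)]
            exact hmax_ge x hx
          · rw [Set.indicator_of_notMem hx, abs_zero]
            exact abs_nonneg _
        refine le_trans ?_ h1
        refine Stmt12Aux.le_vLpNorm (fun η hη hmod => ?_)
        rw [Stmt12Aux.modular_indicator q _ hq0 hB] at hmod
        have hdr : ENNReal.ofReal d ≠ 0 := (ENNReal.ofReal_pos.2 hd0).ne'
        have hdt : ENNReal.ofReal d ≠ ∞ := ENNReal.ofReal_ne_top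
        have hNle : N ≤ η / ENNReal.ofReal d := by
          refine Stmt12Aux.vLpNorm_le ?_ ?_
          · simp [ENNReal.div_eq_zero_iff, hη, hdt]
          · rw [hmodq _]
            have hrw : ((1:ℝ≥0∞) / (η / ENNReal.ofReal d)) = (‖d‖₊ : ℝ≥0∞) / η := by
              rw [one_div, ENNReal.inv_div (Or.inl hdt) (Or.inl hdr),
                show (‖d‖₊ : ℝ≥0∞) = ENNReal.ofReal d from Real.enorm_eq_ofReal hd0.le]
            calc (∫⁻ x in B, ((1:ℝ≥0∞) / (η / ENNReal.ofReal d)) ^ (q x))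
                = ∫⁻ x in B, ((‖d‖₊ : ℝ≥0∞) / η) ^ (q x) := by rw [hrw]
              _ ≤ 1 := hmod
        calc ENNReal.ofReal d * N ≤ ENNReal.ofReal d * (η / ENNReal.ofReal d) := by
              gcongr
          _ = η := ENNReal.mul_div_cancel hdr hdt
      -- chain everything
      have hchain : ENNReal.ofReal d * N ≤ A * (1 ⊔ ρ) :=
        le_trans hdN (le_trans (hMq f) (mul_le_mul_right hfnorm A))
      have hofd : ENNReal.ofReal d
          = (ENNReal.ofReal ((3 * r) ^ n))⁻¹ * ENNReal.ofReal I := by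
        rw [hddef, hrpow, ENNReal.ofReal_mul (by positivity),
          ENNReal.ofReal_inv_of_pos hP]
      have hlvρ : lam * v * ρ ≤ N * ENNReal.ofReal I := by
        calc lam * v * ρ ≤ lam * v * (ENNReal.ofReal β * ENNReal.ofReal I) := by
              gcongr
          _ = (lam * v * (N / (lam * v))) * ENNReal.ofReal I := by
              rw [hβofReal]; ring
          _ = N * ENNReal.ofReal I := by
              rw [ENNReal.mul_div_cancel hlamv0 hlamvtop]
      have hNI : N * ENNReal.ofReal I
          = ENNReal.ofReal ((3 * r) ^ n) * (ENNReal.ofReal d * N) := by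
        rw [hofd,
          show ENNReal.ofReal ((3 * r) ^ n)
              * ((ENNReal.ofReal ((3 * r) ^ n))⁻¹ * ENNReal.ofReal I * N)
            = (ENNReal.ofReal ((3 * r) ^ n) * (ENNReal.ofReal ((3 * r) ^ n))⁻¹)
              * (ENNReal.ofReal I * N) by ring,
          ENNReal.mul_inv_cancel hPne0 hPnetop, one_mul, mul_comm (ENNReal.ofReal I) N]
      have hfinal : (A + 1) * ρ ≤ A * (1 ⊔ ρ) := by
        have h1 : ENNReal.ofReal ((3 * r) ^ n) * ((A + 1) * ρ)
            ≤ ENNReal.ofReal ((3 * r) ^ n) * (A * (1 ⊔ ρ)) := by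
          calc ENNReal.ofReal ((3 * r) ^ n) * ((A + 1) * ρ) = lam * v * ρ := by
                rw [hlv]; ring
            _ ≤ N * ENNReal.ofReal I := hlvρ
            _ = ENNReal.ofReal ((3 * r) ^ n) * (ENNReal.ofReal d * N) := hNI
            _ ≤ ENNReal.ofReal ((3 * r) ^ n) * (A * (1 ⊔ ρ)) := by gcongr
        exact (ENNReal.mul_le_mul_iff_right hPne0 hPnetop).1 h1
      by_contra hcon
      push_neg at hcon
      have hmax' : (1 ⊔ ρ) = ρ := max_eq_right hcon.le
      rw [hmax'] at hfinal
      have hρ0 : ρ ≠ 0 := fun h => by simp [h] at hcon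
      have hA1 : A + 1 ≤ A := (ENNReal.mul_le_mul_iff_left hρ0 hρtop).1 hfinal
      exact absurd hA1 (not_le.2 (ENNReal.lt_add_right hAtop one_ne_zero))
    -- pass to the limit
    have hρfull : (∫⁻ x in B, (ENNReal.ofReal (s x)) ^ (q x)) ≤ 1 := by
      have hmeas : ∀ m : ℕ, Measurable fun x =>
          (ENNReal.ofReal (min (s x) ((m:ℝ) + 1))) ^ (q x) := fun m =>
        ((hs_meas.min measurable_const).ennreal_ofReal).pow hqmeas
      have hmono : Monotone (fun (m : ℕ) (x : EuclideanSpace ℝ (Fin n)) =>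
          (ENNReal.ofReal (min (s x) ((m:ℝ) + 1))) ^ (q x)) := by
        intro a b hab
        intro x
        refine ENNReal.rpow_le_rpow (ENNReal.ofReal_le_ofReal ?_) (hq0 x).le
        exact min_le_min le_rfl (by exact_mod_cast add_le_add_left (Nat.cast_le.2 hab) 1)
      have hsup : ∀ x, (⨆ m : ℕ, (ENNReal.ofReal (min (s x) ((m:ℝ) + 1))) ^ (q x))
          = (ENNReal.ofReal (s x)) ^ (q x) := by
        intro x
        apply le_antisymm
        · exact iSup_le fun m => ENNReal.rpow_le_rpow
            (ENNReal.ofReal_le_ofReal (min_le_left _ _)) (hq0 x).le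
        · have hm : min (s x) ((⌈s x⌉₊ : ℝ) + 1) = s x :=
            min_eq_left (by linarith [Nat.le_ceil (s x)])
          calc (ENNReal.ofReal (s x)) ^ (q x)
              = (ENNReal.ofReal (min (s x) ((⌈s x⌉₊ : ℝ) + 1))) ^ (q x) := by rw [hm]
            _ ≤ ⨆ m : ℕ, (ENNReal.ofReal (min (s x) ((m:ℝ) + 1))) ^ (q x) :=
              le_iSup (fun m : ℕ =>
                (ENNReal.ofReal (min (s x) ((m:ℝ) + 1))) ^ (q x)) ⌈s x⌉₊
      calc (∫⁻ x in B, (ENNReal.ofReal (s x)) ^ (q x))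
          = ∫⁻ x in B, ⨆ m : ℕ, (ENNReal.ofReal (min (s x) ((m:ℝ) + 1))) ^ (q x) :=
            lintegral_congr fun x => (hsup x).symm
        _ = ⨆ m : ℕ, ∫⁻ x in B, (ENNReal.ofReal (min (s x) ((m:ℝ) + 1))) ^ (q x) :=
            lintegral_iSup hmeas hmono
        _ ≤ 1 := iSup_le hkey
    -- conclude
    have hη'0 : lam * v / N ≠ 0 := by
      simp [ENNReal.div_eq_zero_iff, hlamv0, hNtop]
    have hN'le : N' ≤ lam * v / N := by
      refine Stmt12Aux.vLpNorm_le hη'0 ?_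
      rw [hmodq' _]
      have hrw : ((1:ℝ≥0∞) / (lam * v / N)) = ENNReal.ofReal β := by
        rw [one_div, ENNReal.inv_div (Or.inl hNtop) (Or.inl hN0), hβofReal]
      have hptq' : ∀ x, ((1:ℝ≥0∞) / (lam * v / N)) ^ (q x / (q x - 1))
          = (ENNReal.ofReal (s x)) ^ (q x) := by
        intro x
        rw [hrw, ENNReal.ofReal_rpow_of_pos hβ0, ENNReal.ofReal_rpow_of_pos (hs_pos x)]
        congr 1
        rw [hsdef, ← Real.rpow_mul hβ0.le]
        congr 1
        field_simp
      calc (∫⁻ x in B, ((1:ℝ≥0∞) / (lam * v / N)) ^ (q x / (q x - 1)))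
          = ∫⁻ x in B, (ENNReal.ofReal (s x)) ^ (q x) :=
            lintegral_congr fun x => hptq' x
        _ ≤ 1 := hρfull
    calc N * N' ≤ N * (lam * v / N) := by gcongr
      _ = lam * v := ENNReal.mul_div_cancel hN0 hNtop
  constructor
  · -- lower conclusion
    have h2 : (2:ℝ≥0∞)⁻¹ ≤ v⁻¹ * (N * N') := by
      have hd : v / 2 ≤ N * N' := by
        rw [ENNReal.div_le_iff_le_mul (Or.inl two_ne_zero) (Or.inl ENNReal.ofNat_ne_top)]
        calc v ≤ 2 * (N * N') := hlow
          _ = (N * N') * 2 := mul_comm _ _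
      calc (2:ℝ≥0∞)⁻¹ = v⁻¹ * (v / 2) := by
            rw [ENNReal.div_eq_inv_mul,
              show v⁻¹ * (2⁻¹ * v) = 2⁻¹ * (v⁻¹ * v) by ring,
              ENNReal.inv_mul_cancel hv0 hvtop, mul_one]
        _ ≤ v⁻¹ * (N * N') := by gcongr
    refine le_trans ?_ h2
    have hmax : (max 2 lam.toReal)⁻¹ ≤ (2:ℝ)⁻¹ := by
      apply inv_anti₀ two_pos (le_max_left _ _)
    calc ENNReal.ofReal (max 2 lam.toReal)⁻¹ ≤ ENNReal.ofReal 2⁻¹ :=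
          ENNReal.ofReal_le_ofReal hmax
      _ = (2:ℝ≥0∞)⁻¹ := by
          rw [ENNReal.ofReal_inv_of_pos two_pos, ENNReal.ofReal_ofNat]
  · -- upper conclusion
    calc v⁻¹ * (N * N') ≤ v⁻¹ * (lam * v) := by gcongr
      _ = lam * (v⁻¹ * v) := by ring
      _ = lam := by rw [ENNReal.inv_mul_cancel hv0 hvtop, mul_one]
      _ = ENNReal.ofReal lam.toReal := (ENNReal.ofReal_toReal hlamtop).symm
      _ ≤ ENNReal.ofReal (max 2 lam.toReal) := ENNReal.ofReal_le_ofReal (le_max_right _ _)
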